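/- Let S ≥ 3 be an integer and p(0), …, p(S) reals with p(i) > 0 for every i and Σ_{k=0}^S p(k) = 1. Let Σ₀ be the (S+1)×(S+1) real matrix with entry (i+1, j+1) equal to 1_{i=j} p(i) − p(i)p(j) for i, j = 0, …, S, and let B be the S × (S+1) real matrix whose j-th row, for j = 1, …, S−1, has entries 1, −2, 1 in columns j, j+1, j+2 respectively and zeros elsewhere, and whose S-th row has all entries zero except the entries in columns S and S+1, which equal 1 and −2 respectively. Then the S × S matrix V = B Σ₀ Bᵀ is invertible. -/

import Mathlib

open Finset Matrix

lemma sum_restrict {S : ℕ} (f : Fin S → ℝ) (t : Finset (Fin S))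
    (h : ∀ i ∉ t, f i = 0) : ∑ i, f i = ∑ i ∈ t, f i :=
  (Finset.sum_subset (Finset.subset_univ t) (fun i _ hi => h i hi)).symm

lemma key_const (S : ℕ) (hS : 3 ≤ S)
    (B : Matrix (Fin S) (Fin (S + 1)) ℝ)
    (hB : ∀ i j, B i j =
      if (i : ℕ) + 1 < S then
        (if (j : ℕ) = (i : ℕ) then 1
          else if (j : ℕ) = (i : ℕ) + 1 then -2
          else if (j : ℕ) = (i : ℕ) + 2 then 1 else 0)
      else
        (if (j : ℕ) = S - 1 then 1 else if (j : ℕ) = S then -2 else 0))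
    (x : Fin S → ℝ) (c : ℝ)
    (hy : ∀ j : Fin (S + 1), ∑ i, B i j * x i = c) :
    ∀ i, x i = 0 := by
  -- B is uniform: 1 at j = i and j = i+2, -2 at j = i+1
  have hBval : ∀ (i : Fin S) (j : Fin (S + 1)), B i j =
      if (j : ℕ) = (i : ℕ) + 2 then 1
      else if (j : ℕ) = (i : ℕ) + 1 then -2
      else if (j : ℕ) = (i : ℕ) then 1 else 0 := by
    intro i j
    have hi := i.isLt
    have hj := j.isLt
    rw [hB]
    split_ifs <;> first | rfl | omega | exact ‹False›.elim
  set z : ℕ → ℝ := fun n => if h : n < S then x ⟨n, h⟩ else 0 with hzdef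
  have hzval : ∀ (n : ℕ) (h : n < S), z n = x ⟨n, h⟩ := fun n h => dif_pos h
  have hz0 : ∀ n : ℕ, S ≤ n → z n = 0 := fun n h => dif_neg (by omega)
  have p0 : (0 : ℕ) < S := by omega
  have p1 : (1 : ℕ) < S := by omega
  -- equation at j = 0
  have e0 : z 0 = c := by
    have h0 := hy ⟨0, by omega⟩
    have ht : ∀ i ∉ ({⟨0, p0⟩} : Finset (Fin S)), B i ⟨0, by omega⟩ * x i = 0 := by
      intro i hi
      simp only [Finset.mem_singleton] at hi
      have h1 : (i : ℕ) ≠ 0 := fun h => hi (Fin.ext h)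
      rw [hBval]
      simp only [Fin.val_mk]
      split_ifs <;> first | omega | ring1 | exact ‹False›.elim
    rw [sum_restrict _ _ ht, Finset.sum_singleton] at h0
    have b1 : B ⟨0, p0⟩ ⟨0, by omega⟩ = 1 := by
      rw [hBval]; simp only [Fin.val_mk]; split_ifs <;> first | rfl | omega | exact ‹False›.elim
    rw [b1] at h0
    rw [hzval 0 p0]; linarith
  -- equation at j = 1
  have e1 : z 1 - 2 * z 0 = c := by
    have h0 := hy ⟨1, by omega⟩
    have ht : ∀ i ∉ ({⟨0, p0⟩, ⟨1, p1⟩} : Finset (Fin S)), B i ⟨1, by omega⟩ * x i = 0 := by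
      intro i hi
      simp only [Finset.mem_insert, Finset.mem_singleton] at hi
      push_neg at hi
      have h1 : (i : ℕ) ≠ 0 := fun h => hi.1 (Fin.ext h)
      have h2 : (i : ℕ) ≠ 1 := fun h => hi.2 (Fin.ext h)
      rw [hBval]
      simp only [Fin.val_mk]
      split_ifs <;> first | omega | ring1 | exact ‹False›.elim
    rw [sum_restrict _ _ ht, Finset.sum_insert (by simp [Fin.ext_iff]),
        Finset.sum_singleton] at h0
    have b1 : B ⟨0, p0⟩ ⟨1, by omega⟩ = -2 := by
      rw [hBval]; simp only [Fin.val_mk]; split_ifs <;> first | rfl | omega | exact ‹False›.elim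
    have b2 : B ⟨1, p1⟩ ⟨1, by omega⟩ = 1 := by
      rw [hBval]; simp only [Fin.val_mk]; split_ifs <;> first | rfl | omega | exact ‹False›.elim
    rw [b1, b2] at h0
    rw [hzval 0 p0, hzval 1 p1]; linarith
  -- generic recurrence
  have erec : ∀ n : ℕ, n + 2 ≤ S → z (n + 2) - 2 * z (n + 1) + z n = c := by
    intro n hn
    have pn : n < S := by omega
    have pn1 : n + 1 < S := by omega
    have h0 := hy ⟨n + 2, by omega⟩
    rcases lt_or_eq_of_le hn with hlt | heq
    · have ht : ∀ i ∉ ({⟨n, pn⟩, ⟨n + 1, pn1⟩, ⟨n + 2, hlt⟩} : Finset (Fin S)),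
          B i ⟨n + 2, by omega⟩ * x i = 0 := by
        intro i hi
        simp only [Finset.mem_insert, Finset.mem_singleton] at hi
        push_neg at hi
        have h1 : (i : ℕ) ≠ n := fun h => hi.1 (Fin.ext h)
        have h2 : (i : ℕ) ≠ n + 1 := fun h => hi.2.1 (Fin.ext h)
        have h3 : (i : ℕ) ≠ n + 2 := fun h => hi.2.2 (Fin.ext h)
        rw [hBval]
        simp only [Fin.val_mk]
        split_ifs <;> first | omega | ring1 | exact ‹False›.elim
      rw [sum_restrict _ _ ht, Finset.sum_insert (by simp [Fin.ext_iff]),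
          Finset.sum_insert (by simp [Fin.ext_iff]), Finset.sum_singleton] at h0
      have b1 : B ⟨n, pn⟩ ⟨n + 2, by omega⟩ = 1 := by
        rw [hBval]; simp only [Fin.val_mk]; split_ifs <;> first | rfl | omega | exact ‹False›.elim
      have b2 : B ⟨n + 1, pn1⟩ ⟨n + 2, by omega⟩ = -2 := by
        rw [hBval]; simp only [Fin.val_mk]; split_ifs <;> first | rfl | omega | exact ‹False›.elim
      have b3 : B ⟨n + 2, hlt⟩ ⟨n + 2, by omega⟩ = 1 := by
        rw [hBval]; simp only [Fin.val_mk]; split_ifs <;> first | rfl | omega | exact ‹False›.elim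
      rw [b1, b2, b3] at h0
      rw [hzval n pn, hzval (n + 1) pn1, hzval (n + 2) hlt]; linarith
    · have hz2 : z (n + 2) = 0 := hz0 _ (by omega)
      have ht : ∀ i ∉ ({⟨n, pn⟩, ⟨n + 1, pn1⟩} : Finset (Fin S)),
          B i ⟨n + 2, by omega⟩ * x i = 0 := by
        intro i hi
        simp only [Finset.mem_insert, Finset.mem_singleton] at hi
        push_neg at hi
        have h1 : (i : ℕ) ≠ n := fun h => hi.1 (Fin.ext h)
        have h2 : (i : ℕ) ≠ n + 1 := fun h => hi.2 (Fin.ext h)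
        have h3 : (i : ℕ) ≠ n + 2 := by have := i.isLt; omega
        rw [hBval]
        simp only [Fin.val_mk]
        split_ifs <;> first | omega | ring1 | exact ‹False›.elim
      rw [sum_restrict _ _ ht, Finset.sum_insert (by simp [Fin.ext_iff]),
          Finset.sum_singleton] at h0
      have b1 : B ⟨n, pn⟩ ⟨n + 2, by omega⟩ = 1 := by
        rw [hBval]; simp only [Fin.val_mk]; split_ifs <;> first | rfl | omega | exact ‹False›.elim
      have b2 : B ⟨n + 1, pn1⟩ ⟨n + 2, by omega⟩ = -2 := by
        rw [hBval]; simp only [Fin.val_mk]; split_ifs <;> first | rfl | omega | exact ‹False›.elim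
      rw [b1, b2] at h0
      rw [hz2, hzval n pn, hzval (n + 1) pn1]; linarith
  -- closed form z n = c (n+1)(n+2)/2
  have closed : ∀ n : ℕ, n < S → z n = c * (n + 1) * (n + 2) / 2 := by
    intro n
    induction n using Nat.strong_induction_on with
    | _ n ih =>
      rcases n with _ | n
      · intro _; rw [e0]; norm_num
      rcases n with _ | n
      · intro _
        have h1 : z 1 = 3 * c := by linarith [e0, e1]
        rw [h1]; push_cast; ring
      intro hm
      have h1 := ih (n + 1) (by omega) (by omega)
      have h2 := ih n (by omega) (by omega)
      have h3 := erec n (by omega)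
      rw [h1, h2] at h3
      push_cast at h3 ⊢
      linear_combination h3
  -- final equation forces c = 0
  obtain ⟨m, rfl⟩ : ∃ m, S = m + 3 := ⟨S - 3, by omega⟩
  have hfin := erec (m + 1) (by omega)
  rw [hz0 (m + 1 + 2) (by omega), closed (m + 2) (by omega),
      closed (m + 1) (by omega)] at hfin
  push_cast at hfin
  have hc0 : c * ((m : ℝ) + 4) * ((m : ℝ) + 5) = 0 := by linear_combination (-2 : ℝ) * hfin
  have hc : c = 0 := by
    have h4 : (0 : ℝ) < (m : ℝ) + 4 := by positivity
    have h5 : (0 : ℝ) < (m : ℝ) + 5 := by positivity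
    rcases mul_eq_zero.mp hc0 with h | h
    · rcases mul_eq_zero.mp h with h | h
      · exact h
      · linarith
    · linarith
  intro i
  have hcl := closed i i.isLt
  rw [hzval i i.isLt, hc] at hcl
  simpa using hcl

open Finset Matrix

theorem V_invertible
    (S : ℕ) (hS : 3 ≤ S) (p : Fin (S + 1) → ℝ)
    (hp_pos : ∀ i, 0 < p i) (hp_sum : ∑ k, p k = 1)
    (Sig0 : Matrix (Fin (S + 1)) (Fin (S + 1)) ℝ)
    (hSig0 : ∀ i j, Sig0 i j = (if i = j then p i else 0) - p i * p j)
    (B : Matrix (Fin S) (Fin (S + 1)) ℝ)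
    (hB : ∀ i j, B i j =
      if (i : ℕ) + 1 < S then
        (if (j : ℕ) = (i : ℕ) then 1
          else if (j : ℕ) = (i : ℕ) + 1 then -2
          else if (j : ℕ) = (i : ℕ) + 2 then 1 else 0)
      else
        (if (j : ℕ) = S - 1 then 1 else if (j : ℕ) = S then -2 else 0)) :
    IsUnit (B * Sig0 * B.transpose) := by
  rw [← Matrix.mulVec_injective_iff_isUnit]
  have hker : ∀ x : Fin S → ℝ, (B * Sig0 * B.transpose).mulVec x = 0 → x = 0 := by
    intro x hx
    set y : Fin (S + 1) → ℝ := B.transpose.mulVec x with hy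
    set m : ℝ := ∑ j, p j * y j with hm
    have hy' : Matrix.vecMul x B = y := by rw [hy, Matrix.mulVec_transpose]
    -- the quadratic form vanishes
    have hform : y ⬝ᵥ Sig0.mulVec y = 0 := by
      have h1 : x ⬝ᵥ (B * Sig0 * B.transpose).mulVec x = 0 := by
        rw [hx, dotProduct_zero]
      rw [← h1, Matrix.mul_assoc]
      conv_rhs => rw [← Matrix.mulVec_mulVec, Matrix.dotProduct_mulVec, hy',
        ← Matrix.mulVec_mulVec, ← hy]
    -- expand the quadratic form as a weighted sum of squares
    have inner : ∀ i, Sig0.mulVec y i = p i * y i - p i * m := by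
      intro i
      show ∑ j, Sig0 i j * y j = _
      calc ∑ j, Sig0 i j * y j
          = ∑ j, ((if i = j then p i * y j else 0) - p i * (p j * y j)) :=
            Finset.sum_congr rfl (fun j _ => by rw [hSig0]; split_ifs <;> ring)
        _ = (∑ j, if i = j then p i * y j else 0) - ∑ j, p i * (p j * y j) :=
            Finset.sum_sub_distrib _ _
        _ = p i * y i - p i * m := by
            rw [Finset.sum_ite_eq, ← Finset.mul_sum, hm]
            simp
    have hexp : y ⬝ᵥ Sig0.mulVec y = ∑ i, p i * (y i - m) ^ 2 := by
      have h2 : y ⬝ᵥ Sig0.mulVec y = ∑ i, y i * (p i * y i - p i * m) := by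
        simp only [dotProduct, inner]
      have h3 : ∑ i, p i * (y i - m) ^ 2 =
          (∑ i, y i * (p i * y i - p i * m)) - m * (∑ i, p i * y i)
            + m ^ 2 * (∑ i, p i) := by
        rw [Finset.mul_sum, Finset.mul_sum, ← Finset.sum_sub_distrib,
          ← Finset.sum_add_distrib]
        exact Finset.sum_congr rfl (fun i _ => by ring)
      rw [h2, h3, hp_sum, ← hm]
      ring
    -- each summand vanishes, so y is constant
    have hzero : ∀ i ∈ Finset.univ, p i * (y i - m) ^ 2 = 0 := by
      rw [← Finset.sum_eq_zero_iff_of_nonneg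
        (fun i _ => by have := hp_pos i; positivity)]
      rw [← hexp]; exact hform
    have hyconst : ∀ j : Fin (S + 1), ∑ i, B i j * x i = m := by
      intro j
      have h4 := hzero j (Finset.mem_univ j)
      have h5 : (y j - m) ^ 2 = 0 := by
        rcases mul_eq_zero.mp h4 with h | h
        · exact absurd h (ne_of_gt (hp_pos j))
        · exact h
      have h6 : y j = m := by
        have := pow_eq_zero_iff (n := 2) (by norm_num) |>.mp h5
        linarith [sub_eq_zero.mp this]
      rw [← h6, hy]
      simp [Matrix.mulVec, dotProduct, Matrix.transpose_apply]
    funext i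
    exact key_const S hS B hB x m hyconst i
  intro a b hab
  have h0 : (B * Sig0 * B.transpose).mulVec (a - b) = 0 := by
    rw [Matrix.mulVec_sub, hab, sub_self]
  have := hker _ h0
  exact sub_eq_zero.mp this
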